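/- For every k ∈ ℤ with |k| ≥ 1 and every u ∈ ℝ, setting D := k² + u², one has |k·u|/D + ((1 + u²/k²)/8)·(1 − (k²/D)²) ≤ D/2 + 5·k²/D. -/
import Mathlib


/-- Key algebraic multiplier inequality from the proof of Proposition 2.1 (with
`u = η − kt` and `D = k² + u²`): the non-dissipative linear error terms are absorbed by
half the viscous dissipation plus the logarithmic derivative of the weight `m_L`. -/
theorem multiplier_absorption (k : ℤ) (hk : 1 ≤ |k|) (u : ℝ) :
    |(k : ℝ) * u| / ((k : ℝ) ^ 2 + u ^ 2)
      + ((1 + u ^ 2 / (k : ℝ) ^ 2) / 8) * (1 - ((k : ℝ) ^ 2 / ((k : ℝ) ^ 2 + u ^ 2)) ^ 2)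
    ≤ ((k : ℝ) ^ 2 + u ^ 2) / 2 + 5 * (k : ℝ) ^ 2 / ((k : ℝ) ^ 2 + u ^ 2) := by
  have hk1 : (1:ℝ) ≤ |(k:ℝ)| := by exact_mod_cast (by simpa using hk : (1:ℤ) ≤ |k|)
  have hK : (1:ℝ) ≤ (k:ℝ)^2 := by
    nlinarith [hk1, abs_nonneg (k:ℝ), sq_abs (k:ℝ)]
  have hD : (1:ℝ) ≤ (k:ℝ)^2 + u^2 := by nlinarith [sq_nonneg u]
  have hD0 : (0:ℝ) < (k:ℝ)^2 + u^2 := by linarith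
  have hK0 : (0:ℝ) < (k:ℝ)^2 := by linarith
  have h1 : |(k:ℝ)*u| / ((k:ℝ)^2 + u^2) ≤ 1/2 := by
    rw [div_le_iff₀ hD0, abs_mul]
    nlinarith [sq_nonneg (|(k:ℝ)| - |u|), sq_abs (k:ℝ), sq_abs u]
  have h2 : ((1 + u ^ 2 / (k : ℝ) ^ 2) / 8) * (1 - ((k : ℝ) ^ 2 / ((k : ℝ) ^ 2 + u ^ 2)) ^ 2)
      ≤ ((k:ℝ)^2 + u^2) / 8 := by
    have ha : (1 + u ^ 2 / (k : ℝ) ^ 2) / 8 ≤ ((k:ℝ)^2 + u^2) / 8 := by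
      have : u ^ 2 / (k : ℝ) ^ 2 ≤ u ^ 2 := by
        rw [div_le_iff₀ hK0]; nlinarith [sq_nonneg u]
      linarith
    have hb : (1 - ((k : ℝ) ^ 2 / ((k : ℝ) ^ 2 + u ^ 2)) ^ 2) ≤ 1 := by
      have : 0 ≤ ((k : ℝ) ^ 2 / ((k : ℝ) ^ 2 + u ^ 2)) ^ 2 := sq_nonneg _
      linarith
    have hb0 : 0 ≤ (1 - ((k : ℝ) ^ 2 / ((k : ℝ) ^ 2 + u ^ 2)) ^ 2) := by
      have : (k : ℝ) ^ 2 / ((k : ℝ) ^ 2 + u ^ 2) ≤ 1 := by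
        rw [div_le_one hD0]; nlinarith [sq_nonneg u]
      have h0 : 0 ≤ (k : ℝ) ^ 2 / ((k : ℝ) ^ 2 + u ^ 2) := by positivity
      nlinarith
    have ha0 : 0 ≤ (1 + u ^ 2 / (k : ℝ) ^ 2) / 8 := by positivity
    calc ((1 + u ^ 2 / (k : ℝ) ^ 2) / 8) * (1 - ((k : ℝ) ^ 2 / ((k : ℝ) ^ 2 + u ^ 2)) ^ 2)
        ≤ ((1 + u ^ 2 / (k : ℝ) ^ 2) / 8) * 1 := by
          exact mul_le_mul_of_nonneg_left hb ha0
      _ = (1 + u ^ 2 / (k : ℝ) ^ 2) / 8 := by ring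
      _ ≤ ((k:ℝ)^2 + u^2) / 8 := ha
  have h3 : (1:ℝ)/2 + ((k:ℝ)^2 + u^2) / 8
      ≤ ((k:ℝ)^2 + u^2) / 2 + 5 * (k:ℝ)^2 / ((k:ℝ)^2 + u^2) := by
    have key : (1:ℝ)/2 ≤ 3 * ((k:ℝ)^2 + u^2) / 8 + 5 * (k:ℝ)^2 / ((k:ℝ)^2 + u^2) := by
      rw [div_add_div _ _ (by norm_num : (8:ℝ) ≠ 0) (ne_of_gt hD0), div_le_div_iff₀ (by norm_num) (by positivity)]
      nlinarith [sq_nonneg ((k:ℝ)^2 + u^2 - 1), sq_nonneg u]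
    linarith
  linarith
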